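/- Let P_k(v) = v^k (1-v)^{k-1}, Q(v) = v(1-v), R(v) = 1 - 3v. Then for every l ≥ 0 and k ≥ 2, (k-1)k(k-l) P_{k-1}^{(l)}(v) = (k-2) P_k^{(l+2)}(v) Q(v) + (2k-l-2) P_k^{(l+1)}(v) R(v) + (k+1)(2k-l-2)(2k-l-1) P_k^{(l)}(v). -/

import Mathlib

noncomputable def P (k : ℕ) : ℝ → ℝ := fun v => v ^ k * (1 - v) ^ (k - 1)

noncomputable def Q : ℝ → ℝ := fun v => v * (1 - v)

noncomputable def R : ℝ → ℝ := fun v => 1 - 3 * v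

lemma hid (v : ℝ) : HasDerivAt (fun x : ℝ => x) 1 v := hasDerivAt_id v

lemma P_smooth (n : ℕ) : ContDiff ℝ (⊤ : ℕ∞) (P n) := by
  unfold P
  exact (contDiff_id.pow n).mul ((contDiff_const.sub contDiff_id).pow _)

lemma hD (n j : ℕ) (v : ℝ) :
    HasDerivAt (iteratedDeriv j (P n)) (iteratedDeriv (j + 1) (P n) v) v := by
  have h := (P_smooth n).differentiable_iteratedDeriv j (by exact_mod_cast lt_top_iff_ne_top.2 (by simp))
  rw [iteratedDeriv_succ]
  exact (h v).hasDerivAt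

lemma Pderiv (m : ℕ) (v : ℝ) :
    HasDerivAt (P (m + 2))
      (((m : ℝ) + 2) * v ^ (m + 1) * (1 - v) ^ (m + 1)
        - ((m : ℝ) + 1) * v ^ (m + 2) * (1 - v) ^ m) v := by
  have h1 : HasDerivAt (fun x : ℝ => x ^ (m + 2)) (((m : ℝ) + 2) * v ^ (m + 1)) v := by
    simpa using hasDerivAt_pow (m + 2) v
  have h2 : HasDerivAt (fun x : ℝ => (1 - x) ^ (m + 1)) (-(((m : ℝ) + 1) * (1 - v) ^ m)) v := by
    have := (hasDerivAt_pow (m + 1) (1 - v)).comp v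
      ((hasDerivAt_const v (1 : ℝ)).sub (hid v))
    simp at this
    exact this
  have h := h1.mul h2
  have : P (m + 2) = fun x : ℝ => x ^ (m + 2) * (1 - x) ^ (m + 1) := rfl
  rw [this]
  exact h.congr_deriv (by ring)

lemma deriv_eq_of (A B : ℝ → ℝ) (a b : ℝ) (v : ℝ) (h : ∀ x, A x = B x)
    (hA : HasDerivAt A a v) (hB : HasDerivAt B b v) : a = b := by
  rw [← hA.deriv, ← hB.deriv, funext h]

-- first derivative value
lemma D1 (m : ℕ) (v : ℝ) :
    iteratedDeriv 1 (P (m + 2)) v =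
      ((m : ℝ) + 2) * v ^ (m + 1) * (1 - v) ^ (m + 1)
        - ((m : ℝ) + 1) * v ^ (m + 2) * (1 - v) ^ m := by
  rw [iteratedDeriv_one]
  exact (Pderiv m v).deriv

-- the ODE : Q * P' = (k - (2k-1)v) P
lemma ode (m : ℕ) (v : ℝ) :
    Q v * iteratedDeriv 1 (P (m + 2)) v
      = (((m : ℝ) + 2) - (2 * (m : ℝ) + 3) * v) * iteratedDeriv 0 (P (m + 2)) v := by
  rw [D1, iteratedDeriv_zero]
  show Q v * _ = _ * (v ^ (m + 2) * (1 - v) ^ (m + 1))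
  unfold Q
  ring

-- differentiated ODE : Q * P'' = ((k-1) - (2k-3)v) P' - (2k-1) P
lemma odeK (m : ℕ) (v : ℝ) :
    Q v * iteratedDeriv 2 (P (m + 2)) v
      = (((m : ℝ) + 1) - (2 * (m : ℝ) + 1) * v) * iteratedDeriv 1 (P (m + 2)) v
        - (2 * (m : ℝ) + 3) * iteratedDeriv 0 (P (m + 2)) v := by
  have h : ∀ x : ℝ, x * (1 - x) * iteratedDeriv 1 (P (m + 2)) x
      = (((m : ℝ) + 2) - (2 * (m : ℝ) + 3) * x) * iteratedDeriv 0 (P (m + 2)) x := by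
    intro x
    have := ode m x
    unfold Q at this
    linarith [this]
  have hA : HasDerivAt (fun x : ℝ => x * (1 - x) * iteratedDeriv 1 (P (m + 2)) x)
      ((1 - 2 * v) * iteratedDeriv 1 (P (m + 2)) v
        + v * (1 - v) * iteratedDeriv 2 (P (m + 2)) v) v := by
    have hq : HasDerivAt (fun x : ℝ => x * (1 - x)) (1 - 2 * v) v := by
      have := (hid v).mul ((hasDerivAt_const v (1 : ℝ)).fun_sub (hid v))
      exact this.congr_deriv (by ring)
    have := hq.mul (hD (m + 2) 1 v)
    exact this.congr_deriv (by ring)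
  have hB : HasDerivAt (fun x : ℝ =>
      (((m : ℝ) + 2) - (2 * (m : ℝ) + 3) * x) * iteratedDeriv 0 (P (m + 2)) x)
      (-(2 * (m : ℝ) + 3) * iteratedDeriv 0 (P (m + 2)) v
        + (((m : ℝ) + 2) - (2 * (m : ℝ) + 3) * v) * iteratedDeriv 1 (P (m + 2)) v) v := by
    have hc : HasDerivAt (fun x : ℝ => ((m : ℝ) + 2) - (2 * (m : ℝ) + 3) * x)
        (-(2 * (m : ℝ) + 3)) v := by
      have := (hasDerivAt_const v ((m : ℝ) + 2)).sub ((hid v).const_mul (2 * (m : ℝ) + 3))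
      exact this.congr_deriv (by ring)
    have := hc.mul (hD (m + 2) 0 v)
    exact this.congr_deriv (by ring)
  have := deriv_eq_of _ _ _ _ v h hA hB
  unfold Q
  linarith [this]

-- identity family J : k(k-1) f^(n) = ((k-1)-(2k-1)v) P^(n+1) + (2k-1)(2k-n-1) P^(n)
lemma Jfam (m : ℕ) : ∀ n : ℕ, ∀ v : ℝ,
    ((m : ℝ) + 2) * ((m : ℝ) + 1) * iteratedDeriv n (P (m + 1)) v
      = (((m : ℝ) + 1) - (2 * (m : ℝ) + 3) * v) * iteratedDeriv (n + 1) (P (m + 2)) v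
        + (2 * (m : ℝ) + 3) * (2 * (m : ℝ) + 3 - n) * iteratedDeriv n (P (m + 2)) v := by
  intro n
  induction n with
  | zero =>
    intro v
    rw [iteratedDeriv_zero, iteratedDeriv_zero, D1]
    show _ * (v ^ (m + 1) * (1 - v) ^ m) = _ + _ * (v ^ (m + 2) * (1 - v) ^ (m + 1))
    push_cast
    ring
  | succ n ih =>
    intro v
    have hA : HasDerivAt (fun x : ℝ =>
        ((m : ℝ) + 2) * ((m : ℝ) + 1) * iteratedDeriv n (P (m + 1)) x)
        (((m : ℝ) + 2) * ((m : ℝ) + 1) * iteratedDeriv (n + 1) (P (m + 1)) v) v :=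
      (hD (m + 1) n v).const_mul _
    have hB : HasDerivAt (fun x : ℝ =>
        (((m : ℝ) + 1) - (2 * (m : ℝ) + 3) * x) * iteratedDeriv (n + 1) (P (m + 2)) x
          + (2 * (m : ℝ) + 3) * (2 * (m : ℝ) + 3 - n) * iteratedDeriv n (P (m + 2)) x)
        (-(2 * (m : ℝ) + 3) * iteratedDeriv (n + 1) (P (m + 2)) v
          + (((m : ℝ) + 1) - (2 * (m : ℝ) + 3) * v) * iteratedDeriv (n + 2) (P (m + 2)) v
          + (2 * (m : ℝ) + 3) * (2 * (m : ℝ) + 3 - n) * iteratedDeriv (n + 1) (P (m + 2)) v) v := by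
      have hc : HasDerivAt (fun x : ℝ => ((m : ℝ) + 1) - (2 * (m : ℝ) + 3) * x)
          (-(2 * (m : ℝ) + 3)) v := by
        have := (hasDerivAt_const v ((m : ℝ) + 1)).sub ((hid v).const_mul (2 * (m : ℝ) + 3))
        exact this.congr_deriv (by ring)
      have := (hc.mul (hD (m + 2) (n + 1) v)).add ((hD (m + 2) n v).const_mul
        ((2 * (m : ℝ) + 3) * (2 * (m : ℝ) + 3 - n)))
      exact this.congr_deriv (by ring)
    have key := deriv_eq_of _ _ _ _ v ih hA hB
    push_cast at key ⊢
    linarith [key]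

-- the main identity, reindexed
lemma main (m : ℕ) : ∀ l : ℕ, ∀ v : ℝ,
    ((m : ℝ) + 1) * ((m : ℝ) + 2) * ((m : ℝ) + 2 - l) * iteratedDeriv l (P (m + 1)) v
      = (m : ℝ) * iteratedDeriv (l + 2) (P (m + 2)) v * Q v
        + (2 * (m : ℝ) + 2 - l) * iteratedDeriv (l + 1) (P (m + 2)) v * R v
        + ((m : ℝ) + 3) * (2 * (m : ℝ) + 2 - l) * (2 * (m : ℝ) + 3 - l)
            * iteratedDeriv l (P (m + 2)) v := by
  intro l
  induction l with
  | zero =>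
    intro v
    have hJ := Jfam m 0 v
    have hK := odeK m v
    unfold Q R at *
    push_cast at *
    linear_combination ((m : ℝ) + 2) * hJ - (m : ℝ) * hK
  | succ l ih =>
    intro v
    have hA : HasDerivAt (fun x : ℝ =>
        ((m : ℝ) + 1) * ((m : ℝ) + 2) * ((m : ℝ) + 2 - l) * iteratedDeriv l (P (m + 1)) x)
        (((m : ℝ) + 1) * ((m : ℝ) + 2) * ((m : ℝ) + 2 - l) * iteratedDeriv (l + 1) (P (m + 1)) v)
        v := (hD (m + 1) l v).const_mul _
    have hB : HasDerivAt (fun x : ℝ =>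
        (m : ℝ) * iteratedDeriv (l + 2) (P (m + 2)) x * Q x
          + (2 * (m : ℝ) + 2 - l) * iteratedDeriv (l + 1) (P (m + 2)) x * R x
          + ((m : ℝ) + 3) * (2 * (m : ℝ) + 2 - l) * (2 * (m : ℝ) + 3 - l)
              * iteratedDeriv l (P (m + 2)) x)
        ((m : ℝ) * iteratedDeriv (l + 3) (P (m + 2)) v * Q v
          + (m : ℝ) * iteratedDeriv (l + 2) (P (m + 2)) v * (1 - 2 * v)
          + (2 * (m : ℝ) + 2 - l) * iteratedDeriv (l + 2) (P (m + 2)) v * R v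
          + (2 * (m : ℝ) + 2 - l) * iteratedDeriv (l + 1) (P (m + 2)) v * (-3)
          + ((m : ℝ) + 3) * (2 * (m : ℝ) + 2 - l) * (2 * (m : ℝ) + 3 - l)
              * iteratedDeriv (l + 1) (P (m + 2)) v) v := by
      have hq : HasDerivAt Q (1 - 2 * v) v := by
        have := (hid v).mul ((hasDerivAt_const v (1 : ℝ)).fun_sub (hid v))
        unfold Q
        exact this.congr_deriv (by ring)
      have hr : HasDerivAt R (-3 : ℝ) v := by
        have := (hasDerivAt_const v (1 : ℝ)).sub ((hid v).const_mul 3)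
        unfold R
        exact this.congr_deriv (by ring)
      have h1 := (((hD (m + 2) (l + 2) v).const_mul ((m : ℝ))).mul hq)
      have h2 := (((hD (m + 2) (l + 1) v).const_mul (2 * (m : ℝ) + 2 - l)).mul hr)
      have h3 := (hD (m + 2) l v).const_mul
        (((m : ℝ) + 3) * (2 * (m : ℝ) + 2 - l) * (2 * (m : ℝ) + 3 - l))
      have := (h1.add h2).add h3
      exact this.congr_deriv (by ring)
    have key := deriv_eq_of _ _ _ _ v ih hA hB
    have hJ := Jfam m (l + 1) v
    unfold Q R at *
    push_cast at *
    linear_combination key - hJ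

theorem stmt_15 (k l : ℕ) (hk : 2 ≤ k) (v : ℝ) :
    ((k : ℝ) - 1) * (k : ℝ) * ((k : ℝ) - l) * iteratedDeriv l (P (k - 1)) v =
      ((k : ℝ) - 2) * iteratedDeriv (l + 2) (P k) v * Q v
        + (2 * (k : ℝ) - l - 2) * iteratedDeriv (l + 1) (P k) v * R v
        + ((k : ℝ) + 1) * (2 * (k : ℝ) - l - 2) * (2 * (k : ℝ) - l - 1) * iteratedDeriv l (P k) v := by
  obtain ⟨m, rfl⟩ : ∃ m, k = m + 2 := ⟨k - 2, by omega⟩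
  have h := main m l v
  have hsub : m + 2 - 1 = m + 1 := rfl
  rw [hsub]
  push_cast at h ⊢
  linear_combination h
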